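/- Under the same hypotheses (ℓ¹ approximation inequality with constant 0 < γ < 1/2 on a subspace E), for every f ∈ E: (γ/(1−γ)) Σ_j (⟨ζ_j, f⟩ − |⟨ζ_j, f⟩|) |S_j| ≤ Σ_{v∈V} f(v) − ((1−2γ)/(1−γ)) Σ_j ⟨ζ_j, f⟩ |S_j|. -/

import Mathlib

open Finset

/-- Inequality (34): under the `ℓ¹` approximation hypothesis with `0 < γ < 1/2`,
`(γ/(1−γ)) Σ_j (⟨ζ_j,f⟩ − |⟨ζ_j,f⟩|)|S_j| ≤ Σ_v f(v) − ((1−2γ)/(1−γ)) Σ_j ⟨ζ_j,f⟩|S_j|`. -/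
theorem stmt13 {V J : Type*} [Fintype V] [Fintype J]
    (S : J → Finset V)
    (hdisj : ∀ i j, i ≠ j → Disjoint (S i) (S j))
    (hcover : ∀ v : V, ∃ j, v ∈ S j)
    (ζ : J → V → ℝ) (hsupp : ∀ j, ∀ v ∉ S j, ζ j v = 0)
    (γ : ℝ) (hγ0 : 0 < γ) (hγ : γ < 1 / 2)
    (f : V → ℝ)
    (happrox : ∑ j, ∑ v ∈ S j, |f v - ∑ u, ζ j u * f u| ≤ γ * ∑ v, |f v|) :
    (γ / (1 - γ)) * ∑ j, ((∑ u, ζ j u * f u) - |∑ u, ζ j u * f u|) * ((S j).card : ℝ) ≤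
      ∑ v, f v - ((1 - 2 * γ) / (1 - γ)) * ∑ j, (∑ u, ζ j u * f u) * ((S j).card : ℝ) := by
  classical
  have h1γ : (0:ℝ) < 1 - γ := by linarith
  set c : J → ℝ := fun j => ∑ u, ζ j u * f u with hc
  have hUniv : (Finset.univ : Finset V) = Finset.univ.biUnion S := by
    ext v; simpa using hcover v
  have hU : ∀ g : V → ℝ, ∑ v, g v = ∑ j, ∑ v ∈ S j, g v := by
    intro g
    rw [show (∑ v, g v) = ∑ v ∈ Finset.univ.biUnion S, g v from by rw [← hUniv]]
    exact Finset.sum_biUnion (fun i _ j _ hij => hdisj i j hij)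
  set A : ℝ := ∑ v, f v with hA
  set N : ℝ := ∑ v, |f v| with hN
  set T : ℝ := ∑ j, ∑ v ∈ S j, |f v - c j| with hT
  set C : ℝ := ∑ j, c j * ((S j).card : ℝ) with hC
  set M : ℝ := ∑ j, |c j| * ((S j).card : ℝ) with hM
  have hD : A - C = ∑ j, ∑ v ∈ S j, (f v - c j) := by
    rw [hA, hU f, hC, ← Finset.sum_sub_distrib]
    refine Finset.sum_congr rfl fun j _ => ?_
    rw [Finset.sum_sub_distrib, Finset.sum_const, nsmul_eq_mul]
    ring
  have habs : |∑ j, ∑ v ∈ S j, (f v - c j)| ≤ T :=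
    (Finset.abs_sum_le_sum_abs _ _).trans
      (Finset.sum_le_sum fun j _ => Finset.abs_sum_le_sum_abs _ _)
  have hDlow : -(γ * N) ≤ A - C := by
    have h1 : -T ≤ A - C := by
      rw [hD]
      have := neg_abs_le (∑ j, ∑ v ∈ S j, (f v - c j))
      linarith
    linarith [happrox]
  have hNle : N ≤ T + M := by
    have h2 : ∀ j, ∑ v ∈ S j, |f v| ≤ (∑ v ∈ S j, |f v - c j|) + |c j| * ((S j).card : ℝ) := by
      intro j
      have : ∑ v ∈ S j, |f v| ≤ ∑ v ∈ S j, (|f v - c j| + |c j|) := by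
        refine Finset.sum_le_sum fun v _ => ?_
        calc |f v| = |(f v - c j) + c j| := by ring_nf
          _ ≤ |f v - c j| + |c j| := abs_add_le _ _
      rw [Finset.sum_add_distrib, Finset.sum_const, nsmul_eq_mul] at this
      linarith [this]
    calc N = ∑ j, ∑ v ∈ S j, |f v| := hU (fun v => |f v|)
      _ ≤ ∑ j, ((∑ v ∈ S j, |f v - c j|) + |c j| * ((S j).card : ℝ)) :=
          Finset.sum_le_sum fun j _ => h2 j
      _ = T + M := by rw [Finset.sum_add_distrib]
  have hX : ∑ j, (c j - |c j|) * ((S j).card : ℝ) = C - M := by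
    rw [hC, hM, ← Finset.sum_sub_distrib]
    exact Finset.sum_congr rfl fun j _ => by ring
  have key : γ * (C - M) ≤ (1 - γ) * A - (1 - 2 * γ) * C := by
    nlinarith [mul_le_mul_of_nonneg_left hDlow h1γ.le,
      mul_le_mul_of_nonneg_left hNle hγ0.le, happrox]
  have h2 : (γ * (C - M)) / (1 - γ) ≤ ((1 - γ) * A - (1 - 2 * γ) * C) / (1 - γ) :=
    (div_le_div_iff_of_pos_right h1γ).mpr key
  have hgoal : γ / (1 - γ) * (C - M) ≤ A - (1 - 2 * γ) / (1 - γ) * C := by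
    calc γ / (1 - γ) * (C - M) = (γ * (C - M)) / (1 - γ) := by ring
      _ ≤ ((1 - γ) * A - (1 - 2 * γ) * C) / (1 - γ) := h2
      _ = A - (1 - 2 * γ) / (1 - γ) * C := by
          field_simp
  rw [hX]
  exact hgoal
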